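/- The Implicational Propositional Calculus is complete: if an IPC formula Z is a tautology, i.e. evaluates to true under every Boolean valuation of its propositional variables (where ⊃ is interpreted as the classical material conditional), then Z is a theorem of IPC. -/

import Mathlib

/-- IPC formulas: propositional variables and the conditional only. -/
inductive IPCForm : Type
  | var : ℕ → IPCForm
  | imp : IPCForm → IPCForm → IPCForm

infixr:60 (priority := high) " ⊃ " => IPCForm.imp

/-- Hilbert-style IPC derivability from a set of hypotheses. -/
inductive IPCDeriv : Set IPCForm → IPCForm → Prop
  | hyp {Γ : Set IPCForm} {A : IPCForm} : A ∈ Γ → IPCDeriv Γ A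
  | peirce {Γ : Set IPCForm} (A B : IPCForm) : IPCDeriv Γ (((A ⊃ B) ⊃ A) ⊃ A)
  | axK {Γ : Set IPCForm} (A B : IPCForm) : IPCDeriv Γ (A ⊃ (B ⊃ A))
  | axS {Γ : Set IPCForm} (A B C : IPCForm) :
      IPCDeriv Γ ((A ⊃ (B ⊃ C)) ⊃ ((A ⊃ B) ⊃ (A ⊃ C)))
  | mp {Γ : Set IPCForm} {A B : IPCForm} :
      IPCDeriv Γ (A ⊃ B) → IPCDeriv Γ A → IPCDeriv Γ B

/-- Disjunction defined within IPC: A ∨ B := (A ⊃ B) ⊃ B. -/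
def IPCForm.disj (A B : IPCForm) : IPCForm := (A ⊃ B) ⊃ B

/-- Multiple disjunction A₀ ∨ ⋯ ∨ A_N, associated to the left. -/
def IPCForm.bigDisj : (N : ℕ) → (Fin (N + 1) → IPCForm) → IPCForm
  | 0, A => A 0
  | N + 1, A => IPCForm.disj (IPCForm.bigDisj N (fun i => A i.castSucc)) (A (Fin.last (N + 1)))

/-- Boolean evaluation of IPC formulas under a valuation of the variables. -/
def IPCForm.eval (v : ℕ → Bool) : IPCForm → Bool
  | IPCForm.var n => v n
  | IPCForm.imp A B => !A.eval v || B.eval v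


/-! ### Auxiliary lemmas for the completeness proof -/

lemma ipc_weaken {Γ Δ : Set IPCForm} {A : IPCForm} (h : IPCDeriv Γ A) (hs : Γ ⊆ Δ) :
    IPCDeriv Δ A := by
  induction h with
  | hyp h => exact .hyp (hs h)
  | peirce A B => exact .peirce A B
  | axK A B => exact .axK A B
  | axS A B C => exact .axS A B C
  | mp _ _ ih1 ih2 => exact .mp ih1 ih2

lemma ipc_id {Γ : Set IPCForm} (A : IPCForm) : IPCDeriv Γ (A ⊃ A) :=
  .mp (.mp (.axS A (A ⊃ A) A) (.axK A (A ⊃ A))) (.axK A A)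

lemma ipc_ded_aux {Δ : Set IPCForm} {B : IPCForm} (h : IPCDeriv Δ B) :
    ∀ Γ : Set IPCForm, ∀ A : IPCForm, Δ ⊆ insert A Γ → IPCDeriv Γ (A ⊃ B) := by
  induction h with
  | @hyp C hC =>
    intro Γ A hs
    rcases hs hC with h | h
    · subst h; exact ipc_id _
    · exact .mp (.axK _ _) (.hyp h)
  | peirce A B => intro Γ C _; exact .mp (.axK _ _) (.peirce A B)
  | axK A B => intro Γ C _; exact .mp (.axK _ _) (.axK A B)
  | axS A B C => intro Γ D _; exact .mp (.axK _ _) (.axS A B C)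
  | mp _ _ ih1 ih2 =>
    intro Γ A hs
    exact .mp (.mp (.axS _ _ _) (ih1 Γ A hs)) (ih2 Γ A hs)

/-- Deduction theorem. -/
lemma ipc_ded {Γ : Set IPCForm} {A B : IPCForm} (h : IPCDeriv (insert A Γ) B) :
    IPCDeriv Γ (A ⊃ B) :=
  ipc_ded_aux h Γ A (le_refl _)

/-- The literal associated with a variable under a valuation (relative falsum `Z`). -/
def ipcLit (Z : IPCForm) (v : ℕ → Bool) (n : ℕ) : IPCForm :=
  if v n then .var n else .var n ⊃ Z

/-- Hypothesis set: literals for all variables below `M`. -/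
def ipcHyps (Z : IPCForm) (v : ℕ → Bool) (M : ℕ) : Set IPCForm :=
  {A | ∃ n < M, A = ipcLit Z v n}

/-- A bound on the variables of a formula. -/
def ipcBnd : IPCForm → ℕ
  | .var n => n + 1
  | .imp A B => max (ipcBnd A) (ipcBnd B)

/-- Kalmár-style lemma, relative to the target tautology `Z`. -/
lemma ipc_kalmar (Z : IPCForm) (v : ℕ → Bool) (M : ℕ) (A : IPCForm) :
    ipcBnd A ≤ M →
      (A.eval v = true → IPCDeriv (ipcHyps Z v M) ((Z ⊃ A) ⊃ A)) ∧
      (A.eval v = false → IPCDeriv (ipcHyps Z v M) (A ⊃ Z)) := by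
  induction A with
  | var n =>
    intro hM
    have hn : n < M := hM
    constructor
    · intro ht
      have ht' : v n = true := ht
      apply ipc_ded
      exact .hyp (Set.mem_insert_of_mem _ ⟨n, hn, by simp [ipcLit, ht']⟩)
    · intro hf
      have hf' : v n = false := hf
      exact .hyp ⟨n, hn, by simp [ipcLit, hf']⟩
  | imp A B ihA ihB =>
    intro hM
    have hA : ipcBnd A ≤ M := le_trans (le_max_left _ _) hM
    have hB : ipcBnd B ≤ M := le_trans (le_max_right _ _) hM
    have hev : (A ⊃ B).eval v = (!A.eval v || B.eval v) := rfl
    constructor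
    · intro ht
      apply ipc_ded
      apply ipc_ded
      -- context: insert A (insert (Z ⊃ (A ⊃ B)) Γ) ⊢ B
      set Γ2 : Set IPCForm := insert A (insert (Z ⊃ (A ⊃ B)) (ipcHyps Z v M)) with hΓ2
      have hsub : ipcHyps Z v M ⊆ Γ2 := fun _ h =>
        Set.mem_insert_of_mem _ (Set.mem_insert_of_mem _ h)
      have dA : IPCDeriv Γ2 A := .hyp (Set.mem_insert _ _)
      have d1 : IPCDeriv Γ2 (Z ⊃ (A ⊃ B)) :=
        .hyp (Set.mem_insert_of_mem _ (Set.mem_insert _ _))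
      cases hb : B.eval v with
      | false =>
        have ha : A.eval v = false := by
          rw [hev, hb] at ht; simpa using ht
        have dAZ : IPCDeriv Γ2 (A ⊃ Z) := ipc_weaken ((ihA hA).2 ha) hsub
        have dZ : IPCDeriv Γ2 Z := .mp dAZ dA
        exact .mp (.mp d1 dZ) dA
      | true =>
        have dZB : IPCDeriv Γ2 ((Z ⊃ B) ⊃ B) := ipc_weaken ((ihB hB).1 hb) hsub
        have dZB' : IPCDeriv Γ2 (Z ⊃ B) := by
          apply ipc_ded
          have dZ : IPCDeriv (insert Z Γ2) Z := .hyp (Set.mem_insert _ _)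
          have d1' : IPCDeriv (insert Z Γ2) (Z ⊃ (A ⊃ B)) :=
            ipc_weaken d1 (Set.subset_insert _ _)
          have dA' : IPCDeriv (insert Z Γ2) A := ipc_weaken dA (Set.subset_insert _ _)
          exact .mp (.mp d1' dZ) dA'
        exact .mp dZB dZB'
    · intro hf
      rw [hev] at hf
      have ha : A.eval v = true := by
        cases h : A.eval v with
        | true => rfl
        | false => rw [h] at hf; simp at hf
      have hb : B.eval v = false := by
        cases h : B.eval v with
        | false => rfl
        | true => rw [ha, h] at hf; simp at hf
      apply ipc_ded
      set Γ1 : Set IPCForm := insert (A ⊃ B) (ipcHyps Z v M) with hΓ1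
      have key : IPCDeriv Γ1 ((Z ⊃ A) ⊃ Z) := by
        apply ipc_ded
        set Γ2 : Set IPCForm := insert (Z ⊃ A) Γ1 with hΓ2
        have hsub : ipcHyps Z v M ⊆ Γ2 := fun _ h =>
          Set.mem_insert_of_mem _ (Set.mem_insert_of_mem _ h)
        have dZA : IPCDeriv Γ2 ((Z ⊃ A) ⊃ A) := ipc_weaken ((ihA hA).1 ha) hsub
        have dA : IPCDeriv Γ2 A := .mp dZA (.hyp (Set.mem_insert _ _))
        have dB : IPCDeriv Γ2 B :=
          .mp (.hyp (Set.mem_insert_of_mem _ (Set.mem_insert _ _))) dA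
        exact .mp (ipc_weaken ((ihB hB).2 hb) hsub) dB
      exact .mp (.peirce Z A) key

/-- Variable elimination step. -/
lemma ipc_step (Z : IPCForm) (M : ℕ)
    (h : ∀ v : ℕ → Bool, IPCDeriv (ipcHyps Z v (M + 1)) Z) (v : ℕ → Bool) :
    IPCDeriv (ipcHyps Z v M) Z := by
  have mkded : ∀ b : Bool, IPCDeriv (ipcHyps Z v M)
      (ipcLit Z (Function.update v M b) M ⊃ Z) := by
    intro b
    apply ipc_ded
    refine ipc_weaken (h (Function.update v M b)) ?_
    rintro X ⟨n, hn, rfl⟩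
    rcases Nat.lt_succ_iff_lt_or_eq.mp hn with hn' | rfl
    · refine Set.mem_insert_of_mem _ ⟨n, hn', ?_⟩
      have : Function.update v M b n = v n := Function.update_of_ne (Nat.ne_of_lt hn') _ _
      simp [ipcLit, this]
    · exact Set.mem_insert _ _
  have h1 : IPCDeriv (ipcHyps Z v M) (IPCForm.var M ⊃ Z) := by
    have := mkded true
    simpa [ipcLit, Function.update_self] using this
  have h0 : IPCDeriv (ipcHyps Z v M) ((IPCForm.var M ⊃ Z) ⊃ Z) := by
    have := mkded false
    simpa [ipcLit, Function.update_self] using this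
  exact .mp h0 h1

/-- Completeness of the Implicational Propositional Calculus. -/
theorem ipc_complete (Z : IPCForm)
    (htaut : ∀ v : ℕ → Bool, Z.eval v = true) :
    IPCDeriv ∅ Z := by
  have key : ∀ M : ℕ, (∀ v : ℕ → Bool, IPCDeriv (ipcHyps Z v M) Z) → IPCDeriv ∅ Z := by
    intro M
    induction M with
    | zero =>
      intro h
      refine ipc_weaken (h fun _ => true) ?_
      rintro X ⟨n, hn, _⟩
      exact absurd hn (Nat.not_lt_zero n)
    | succ M ih =>
      intro h
      exact ih (ipc_step Z M h)
  refine key (ipcBnd Z) fun v => ?_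
  have hk := (ipc_kalmar Z v (ipcBnd Z) Z le_rfl).1 (htaut v)
  exact .mp hk (ipc_id Z)
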